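/- For each fixed $F\in(1,3/2)$, let $L(\mu)$ denote the value $z_r^{-2F}\bigl((z_r-1)(D(z_r-1)-1)\bigr)^2-2h_0(\mu)\bigl(D(F-2)z_r^2-(2D+1)(F-1)z_r+F(D+1)\bigr)$ at $z_r=1-p_1(\mu)$, $\mu=(D,F)$. Then $L>0$ at the boundary parameter values $D=-F$ and $D=-1/2$: namely $L((-F,F))=1/F^2$ and $L((-\tfrac12,F))=\tfrac{F^F(F-1)^{1-F}+2-3F}{4F^2(F-1)}$, and both are strictly positive for $F\in(1,3/2)$. -/

import Mathlib

set_option maxHeartbeats 1000000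


open Real

noncomputable def aQ (D F : ℝ) : ℝ := D/(2*(1-F))
noncomputable def bQ (D F : ℝ) : ℝ := (D-F+1)/((1-F)*(1-2*F))
noncomputable def cQ (D F : ℝ) : ℝ := (F-D-1)/(2*F*(1-F)*(1-2*F))
noncomputable def p1Q (D F : ℝ) : ℝ :=
  (-(bQ D F) - Real.sqrt ((bQ D F)^2 - 4*(aQ D F)*(cQ D F)))/(2*(aQ D F))
noncomputable def h0Q (D F : ℝ) : ℝ := (F-D-1)/(2*F*(F-1)*(2*F-1))
noncomputable def LQ (D F : ℝ) : ℝ :=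
  (1 - p1Q D F) ^ (-(2*F)) * (((1 - p1Q D F) - 1) * (D * ((1 - p1Q D F) - 1) - 1))^2
    - 2 * h0Q D F *
      (D*(F-2) * (1 - p1Q D F)^2 - (2*D+1)*(F-1) * (1 - p1Q D F) + F*(D+1))

section Aux
open Set

lemma log_ge_poly (t : ℝ) (ht : 0 ≤ t) :
    t - t^2/2 + t^3/3 - t^4/4 ≤ Real.log (1+t) := by
  have key : ∀ x ∈ Set.Ici (0:ℝ), HasDerivAt
      (fun s => Real.log (1+s) - (s - s^2/2 + s^3/3 - s^4/4))
      (1/(1+x) - (1 - x + x^2 - x^3)) x := by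
    intro x hx
    have hx0 : (0:ℝ) ≤ x := hx
    have h1 : HasDerivAt (fun s : ℝ => 1 + s) 1 x := (hasDerivAt_id x).const_add 1
    have h2 : HasDerivAt (fun s : ℝ => Real.log (1+s)) (1/(1+x)) x :=
      h1.log (by positivity)
    have h3 : HasDerivAt (fun s : ℝ => s - s^2/2 + s^3/3 - s^4/4)
        (1 - x + x^2 - x^3) x := by
      have hp2 := (hasDerivAt_pow 2 x).div_const 2
      have hp3 := (hasDerivAt_pow 3 x).div_const 3
      have hp4 := (hasDerivAt_pow 4 x).div_const 4
      have h := (((hasDerivAt_id x).sub hp2).add hp3).sub hp4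
      refine h.congr_deriv ?_
      push_cast
      ring
    exact h2.sub h3
  have mono : MonotoneOn (fun s => Real.log (1+s) - (s - s^2/2 + s^3/3 - s^4/4))
      (Set.Ici (0:ℝ)) := by
    apply monotoneOn_of_deriv_nonneg (convex_Ici 0)
    · exact fun x hx => ((key x hx).continuousAt).continuousWithinAt
    · intro x hx
      rw [interior_Ici] at hx
      exact ((key x (Set.mem_Ici.mpr (le_of_lt (Set.mem_Ioi.mp hx)))).differentiableAt).differentiableWithinAt
    · intro x hx
      rw [interior_Ici] at hx
      rw [(key x (Set.mem_Ici.mpr (le_of_lt (Set.mem_Ioi.mp hx)))).deriv]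
      have hx0 : (0:ℝ) < x := hx
      rw [sub_nonneg, le_div_iff₀ (by positivity : (0:ℝ) < 1 + x)]
      nlinarith [pow_pos hx0 4]
  have h := mono Set.self_mem_Ici (Set.mem_Ici.mpr ht) ht
  simp only [Real.log_one] at h
  norm_num at h
  linarith

lemma log_le_poly (x : ℝ) (hx : 0 ≤ x) :
    Real.log (1+x) ≤ x - x^2/2 + x^3/3 - x^4/4 + x^5/5 := by
  have key : ∀ y ∈ Set.Ici (0:ℝ), HasDerivAt
      (fun s => (s - s^2/2 + s^3/3 - s^4/4 + s^5/5) - Real.log (1+s))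
      ((1 - y + y^2 - y^3 + y^4) - 1/(1+y)) y := by
    intro y hy
    have hy0 : (0:ℝ) ≤ y := hy
    have h1 : HasDerivAt (fun s : ℝ => 1 + s) 1 y := (hasDerivAt_id y).const_add 1
    have h2 : HasDerivAt (fun s : ℝ => Real.log (1+s)) (1/(1+y)) y :=
      h1.log (by positivity)
    have h3 : HasDerivAt (fun s : ℝ => s - s^2/2 + s^3/3 - s^4/4 + s^5/5)
        (1 - y + y^2 - y^3 + y^4) y := by
      have hp2 := (hasDerivAt_pow 2 y).div_const 2
      have hp3 := (hasDerivAt_pow 3 y).div_const 3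
      have hp4 := (hasDerivAt_pow 4 y).div_const 4
      have hp5 := (hasDerivAt_pow 5 y).div_const 5
      have h := ((((hasDerivAt_id y).sub hp2).add hp3).sub hp4).add hp5
      refine h.congr_deriv ?_
      push_cast
      ring
    exact h3.sub h2
  have mono : MonotoneOn (fun s => (s - s^2/2 + s^3/3 - s^4/4 + s^5/5) - Real.log (1+s))
      (Set.Ici (0:ℝ)) := by
    apply monotoneOn_of_deriv_nonneg (convex_Ici 0)
    · exact fun y hy => ((key y hy).continuousAt).continuousWithinAt
    · intro y hy
      rw [interior_Ici] at hy
      exact ((key y (Set.mem_Ici.mpr (le_of_lt (Set.mem_Ioi.mp hy)))).differentiableAt).differentiableWithinAt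
    · intro y hy
      rw [interior_Ici] at hy
      rw [(key y (Set.mem_Ici.mpr (le_of_lt (Set.mem_Ioi.mp hy)))).deriv]
      have hy0 : (0:ℝ) < y := hy
      rw [sub_nonneg, div_le_iff₀ (by positivity : (0:ℝ) < 1 + y)]
      nlinarith [pow_pos hy0 5]
  have h := mono Set.self_mem_Ici (Set.mem_Ici.mpr hx) hx
  simp only [Real.log_one] at h
  norm_num at h
  linarith


lemma poly1_pos (t L : ℝ) (h1 : 0 ≤ t) (h2 : t ≤ 1/4)
    (hL : 0.6931 ≤ L) :
    0 < (2*L-1) + (10*L-4)*t + (20*L-85/6)*t^2 + (20*L-51/2)*t^3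
      + (10*L-673/20)*t^4 + (2*L-203/12)*t^5 - (14/3)*t^6 - (4/3)*t^7
      - (11/12)*t^8 - (1/4)*t^9 := by
  nlinarith [sq_nonneg t, pow_le_pow_left₀ h1 h2 2, pow_le_pow_left₀ h1 h2 3,
    pow_le_pow_left₀ h1 h2 4, pow_le_pow_left₀ h1 h2 5, pow_le_pow_left₀ h1 h2 6,
    pow_le_pow_left₀ h1 h2 7, pow_le_pow_left₀ h1 h2 8, pow_le_pow_left₀ h1 h2 9,
    mul_nonneg h1 h1, sq_nonneg (t - 1/4)]

lemma poly2_pos (t L : ℝ) (h1 : 1/4 ≤ t) (h2 : t ≤ 1/2)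
    (hL : 0.6931 ≤ L) (hL2 : L ≤ 0.6932) :
    0 < (L-1) + (5*L-2)*t + (10*L-25/6)*t^2 + (10*L-11/2)*t^3
      + (5*L-273/20)*t^4 + (L-83/12)*t^5 - (8/3)*t^6 - (4/3)*t^7
      - (11/12)*t^8 - (1/4)*t^9 := by
  nlinarith [pow_le_pow_left₀ (by linarith : (0:ℝ) ≤ t) h2 4,
    pow_le_pow_left₀ (by linarith : (0:ℝ) ≤ t) h2 5,
    pow_le_pow_left₀ (by linarith : (0:ℝ) ≤ t) h2 6,
    pow_le_pow_left₀ (by linarith : (0:ℝ) ≤ t) h2 7,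
    pow_le_pow_left₀ (by linarith : (0:ℝ) ≤ t) h2 8,
    pow_le_pow_left₀ (by linarith : (0:ℝ) ≤ t) h2 9,
    pow_le_pow_left₀ (by norm_num : (0:ℝ) ≤ 1/4) h1 2,
    pow_le_pow_left₀ (by norm_num : (0:ℝ) ≤ 1/4) h1 3,
    sq_nonneg (t-1/4), sq_nonneg (t-1/2)]

lemma key_log (t : ℝ) (ht : 0 < t) (ht2 : t < 1/2) :
    Real.log (1+3*t) < (1+t)*Real.log (1+t) - t*Real.log t := by
  have hu : (0:ℝ) < 1 + t := by linarith
  have hL1 : 0.6931 ≤ Real.log 2 := by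
    have := Real.log_two_gt_d9; linarith
  have hL2 : Real.log 2 ≤ 0.6932 := by
    have := Real.log_two_lt_d9; linarith
  set x : ℝ := 2*t/(1+t) with hxdef
  have hx0 : 0 ≤ x := by positivity
  have hsplit : Real.log (1+3*t) = Real.log (1+t) + Real.log (1+x) := by
    rw [← Real.log_mul (by positivity) (by positivity)]
    congr 1
    rw [hxdef]
    field_simp
    ring
  have hub := log_le_poly x hx0
  have hlb := log_ge_poly t ht.le
  have hlb' : t*(t - t^2/2 + t^3/3 - t^4/4) ≤ t * Real.log (1+t) :=
    mul_le_mul_of_nonneg_left hlb ht.le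
  rcases le_or_gt t (1/4) with hc | hc
  · -- tangent at 1/4 : -log t ≥ 2 log 2 + 1 - 4t
    have htan : Real.log t ≤ 4*t - 1 - 2*Real.log 2 := by
      have h4 : Real.log (4*t) ≤ 4*t - 1 := Real.log_le_sub_one_of_pos (by linarith)
      have : Real.log (4*t) = Real.log 4 + Real.log t :=
        Real.log_mul (by norm_num) (ne_of_gt ht)
      have h42 : Real.log 4 = 2 * Real.log 2 := by
        rw [show (4:ℝ) = 2^2 by norm_num, Real.log_pow]
        push_cast; ring
      linarith
    have htan' : t * (2*Real.log 2 + 1 - 4*t) ≤ -(t * Real.log t) := by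
      have := mul_le_mul_of_nonneg_left htan ht.le
      nlinarith
    have hid : t*(t - t^2/2 + t^3/3 - t^4/4) + t*(2*Real.log 2 + 1 - 4*t)
        - (x - x^2/2 + x^3/3 - x^4/4 + x^5/5)
        = t * ((2*Real.log 2-1) + (10*Real.log 2-4)*t + (20*Real.log 2-85/6)*t^2
          + (20*Real.log 2-51/2)*t^3 + (10*Real.log 2-673/20)*t^4
          + (2*Real.log 2-203/12)*t^5 - (14/3)*t^6 - (4/3)*t^7
          - (11/12)*t^8 - (1/4)*t^9) / (1+t)^5 := by
      rw [hxdef]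
      field_simp
      ring
    have hpos := poly1_pos t (Real.log 2) ht.le hc hL1
    have hfrac : 0 < t * ((2*Real.log 2-1) + (10*Real.log 2-4)*t + (20*Real.log 2-85/6)*t^2
          + (20*Real.log 2-51/2)*t^3 + (10*Real.log 2-673/20)*t^4
          + (2*Real.log 2-203/12)*t^5 - (14/3)*t^6 - (4/3)*t^7
          - (11/12)*t^8 - (1/4)*t^9) / (1+t)^5 := by positivity
    linarith
  · have htan : Real.log t ≤ 2*t - 1 - Real.log 2 := by
      have h4 : Real.log (2*t) ≤ 2*t - 1 := Real.log_le_sub_one_of_pos (by linarith)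
      have : Real.log (2*t) = Real.log 2 + Real.log t :=
        Real.log_mul (by norm_num) (ne_of_gt ht)
      linarith
    have htan' : t * (Real.log 2 + 1 - 2*t) ≤ -(t * Real.log t) := by
      have := mul_le_mul_of_nonneg_left htan ht.le
      nlinarith
    have hid : t*(t - t^2/2 + t^3/3 - t^4/4) + t*(Real.log 2 + 1 - 2*t)
        - (x - x^2/2 + x^3/3 - x^4/4 + x^5/5)
        = t * ((Real.log 2-1) + (5*Real.log 2-2)*t + (10*Real.log 2-25/6)*t^2
          + (10*Real.log 2-11/2)*t^3 + (5*Real.log 2-273/20)*t^4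
          + (Real.log 2-83/12)*t^5 - (8/3)*t^6 - (4/3)*t^7
          - (11/12)*t^8 - (1/4)*t^9) / (1+t)^5 := by
      rw [hxdef]
      field_simp
      ring
    have hpos := poly2_pos t (Real.log 2) hc.le ht2.le hL1 hL2
    have hfrac : 0 < t * ((Real.log 2-1) + (5*Real.log 2-2)*t + (10*Real.log 2-25/6)*t^2
          + (10*Real.log 2-11/2)*t^3 + (5*Real.log 2-273/20)*t^4
          + (Real.log 2-83/12)*t^5 - (8/3)*t^6 - (4/3)*t^7
          - (11/12)*t^8 - (1/4)*t^9) / (1+t)^5 := by positivity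
    linarith

lemma crux (F : ℝ) (hF : 1 < F) (hF2 : F < 3/2) :
    3*F - 2 < F ^ F * (F-1) ^ (1-F) := by
  have h1 : (0:ℝ) < F - 1 := by linarith
  have h0 : (0:ℝ) < F := by linarith
  have hrpos : (0:ℝ) < F ^ F * (F-1) ^ (1-F) := by positivity
  have hlpos : (0:ℝ) < 3*F - 2 := by linarith
  rw [← Real.exp_log hrpos, ← Real.exp_log hlpos]
  apply Real.exp_lt_exp.mpr
  rw [Real.log_mul (by positivity) (by positivity), Real.log_rpow h0, Real.log_rpow h1]
  have := key_log (F-1) (by linarith) (by linarith)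
  have e1 : 1 + 3*(F-1) = 3*F - 2 := by ring
  have e2 : 1 + (F-1) = F := by ring
  rw [e1, e2] at this
  nlinarith [this]

end Aux

/-- At the boundary parameter values `D = -F` and `D = -1/2` of `Λ` (for `F ∈ (1,3/2)`),
the function `L` takes the values `1/F²` and `(F^F (F-1)^(1-F) + 2 - 3F)/(4F²(F-1))`
respectively, and both are strictly positive. -/
theorem L_positive_on_boundary (F : ℝ) (hF : 1 < F) (hF2 : F < 3/2) :
    LQ (-F) F = 1/F^2
    ∧ LQ (-(1/2)) F = (F ^ F * (F-1) ^ (1-F) + 2 - 3*F)/(4*F^2*(F-1))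
    ∧ 0 < LQ (-F) F
    ∧ 0 < LQ (-(1/2)) F := by
  have hF0 : (0:ℝ) < F := by linarith
  have hF1 : (0:ℝ) < F - 1 := by linarith
  have h1F : (1:ℝ) - F ≠ 0 := by intro h; nlinarith
  have h12F : (1:ℝ) - 2*F ≠ 0 := by intro h; nlinarith
  have h2F1 : (0:ℝ) < 2*F - 1 := by linarith
  have hFne : F ≠ 0 := ne_of_gt hF0
  have hF1ne : F - 1 ≠ 0 := ne_of_gt hF1
  -- Case D = -F
  have hdisc1 : (bQ (-F) F)^2 - 4*(aQ (-F) F)*(cQ (-F) F) = 0 := by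
    unfold aQ bQ cQ
    field_simp
    ring
  have hp1 : p1Q (-F) F = 1/F := by
    unfold p1Q
    rw [hdisc1, Real.sqrt_zero]
    unfold aQ bQ
    field_simp [show (1:ℝ) - F*2 ≠ 0 by intro h; nlinarith]
    ring
  have hz1 : 1 - p1Q (-F) F = (F-1)/F := by
    rw [hp1]; field_simp
  have e1 : LQ (-F) F = 1/F^2 := by
    rw [LQ, hz1, h0Q]
    have hzero : ((F-1)/F - 1) * ((-F) * ((F-1)/F - 1) - 1) = 0 := by
      have h2 : (-F) * ((F-1)/F - 1) - 1 = 0 := by field_simp; ring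
      rw [h2, mul_zero]
    rw [hzero]
    rw [zero_pow (by norm_num), mul_zero, zero_sub]
    field_simp
    ring
  -- Case D = -1/2
  have hw0 : (0:ℝ) ≤ (F-1)/F := by positivity
  set w : ℝ := Real.sqrt ((F-1)/F) with hwdef
  have hw2 : w^2 = (F-1)/F := Real.sq_sqrt hw0
  have hwpos : 0 < w := Real.sqrt_pos.mpr (by positivity)
  have hval : (w/(2*(F-1)))^2 = 1/(4*F*(F-1)) := by
    rw [div_pow, hw2]
    field_simp
    ring
  have hdisc2 : (bQ (-(1/2)) F)^2 - 4*(aQ (-(1/2)) F)*(cQ (-(1/2)) F)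
      = (w/(2*(F-1)))^2 := by
    rw [hval]
    unfold aQ bQ cQ
    field_simp
    ring
  have hp2 : p1Q (-(1/2)) F = 1 - w := by
    unfold p1Q
    rw [hdisc2, Real.sqrt_sq (by positivity)]
    unfold aQ bQ
    field_simp
    ring
  have hz2 : 1 - p1Q (-(1/2)) F = w := by rw [hp2]; ring
  -- rpow computation
  have hrw : w ^ (-(2*F)) = F ^ F * (F-1) ^ (1-F) / (F-1) := by
    have hA : (0:ℝ) < F ^ F := Real.rpow_pos_of_pos hF0 _
    have hB : (0:ℝ) < (F-1) ^ (F:ℝ) := Real.rpow_pos_of_pos hF1 _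
    have h1 : w = ((F-1)/F) ^ ((1:ℝ)/2) := by rw [hwdef, Real.sqrt_eq_rpow]
    rw [h1, ← Real.rpow_mul hw0]
    rw [show (1:ℝ)/2 * (-(2*F)) = -F by ring]
    rw [Real.div_rpow (le_of_lt hF1) (le_of_lt hF0)]
    rw [Real.rpow_neg (le_of_lt hF1), Real.rpow_neg (le_of_lt hF0)]
    have hsub : (F-1)^((1:ℝ)-F) = (F-1) / (F-1)^(F:ℝ) := by
      rw [show (1:ℝ)-F = 1 + (-F) by ring, Real.rpow_add hF1, Real.rpow_one,
        Real.rpow_neg (le_of_lt hF1), div_eq_mul_inv]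
    rw [hsub]
    field_simp
  have hsq : ((w - 1) * ((-(1/2)) * (w - 1) - 1))^2 = 1/(4*F^2) := by
    have h : ((w - 1) * ((-(1/2)) * (w - 1) - 1)) = -(w^2-1)/2 := by ring
    rw [h, hw2]
    field_simp
    ring
  have e2 : LQ (-(1/2)) F = (F ^ F * (F-1) ^ (1-F) + 2 - 3*F)/(4*F^2*(F-1)) := by
    rw [LQ, hz2, h0Q, hrw, hsq, hw2]
    have hB : (0:ℝ) < (F-1) ^ (1-F) := Real.rpow_pos_of_pos hF1 _
    have hA : (0:ℝ) < F ^ F := Real.rpow_pos_of_pos hF0 _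
    field_simp [ne_of_gt h2F1, (by linarith : (0:ℝ) < F*2-1).ne']
    ring
  refine ⟨e1, e2, ?_, ?_⟩
  · rw [e1]; positivity
  · rw [e2]
    apply div_pos
    · have := crux F hF hF2; linarith
    · positivity
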